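/- arXiv:2512.12502 — 3 statements merged into one kernel-verified Lean document; each statement's English description precedes it below -/
import Mathlib

section
/- Let H be a real Hilbert space, let T₁, …, T_N : H ⇒ H be set-valued operators, let S : H^N → H^N be an invertible bounded self-adjoint linear operator, and let K : H^N → H^N be a bounded linear operator with closed range whose kernel equals the diagonal subspace ℝ𝟏 = {z ∈ H^N : z₁ = … = z_N}. Define T : H^N ⇒ H^N by T(x) = T₁(x₁) × … × T_N(x_N). Then y ∈ H^N solves 0 ∈ S T(S y) + (K S)* N_{{0}}(K S y) if and only if y = S⁻¹(z, …, z) for some z ∈ H and z solves 0 ∈ Σ_{i=1}^N T_i(z). -/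
open scoped InnerProductSpace

/-- Finite `L²` products of complete spaces are complete. -/
instance piLpCompleteSpace {ι : Type*} [Fintype ι] {α : ι → Type*}
    [∀ i, NormedAddCommGroup (α i)] [∀ i, CompleteSpace (α i)] : CompleteSpace (PiLp 2 α) :=
  inferInstance

open ContinuousLinearMap in

lemma key_range_adjoint {E F : Type*} [NormedAddCommGroup E] [InnerProductSpace ℝ E]
    [CompleteSpace E] [NormedAddCommGroup F] [InnerProductSpace ℝ F] [CompleteSpace F]
    (K : E →L[ℝ] F) (hKrange : IsClosed (Set.range K)) (b : E)
    (hb : ∀ d : E, K d = 0 → ⟪b, d⟫_ℝ = 0) :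
    ∃ u : F, ContinuousLinearMap.adjoint K u = b := by
  classical
  set D : Submodule ℝ E := K.ker with hD
  haveI : CompleteSpace D := (ContinuousLinearMap.isClosed_ker K).completeSpace_coe
  haveI : CompleteSpace (Dᗮ : Submodule ℝ E) :=
    (Submodule.isClosed_orthogonal D).completeSpace_coe
  set M : Submodule ℝ F := K.range with hM
  haveI : CompleteSpace M := by
    have : IsClosed (M : Set F) := by
      simpa [hM, LinearMap.coe_range] using hKrange
    exact this.completeSpace_coe
  -- the restricted operator
  set Kr : (Dᗮ : Submodule ℝ E) →L[ℝ] M :=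
    (K.codRestrict M (fun x => LinearMap.mem_range_self _ x)).comp (Submodule.subtypeL Dᗮ)
    with hKr
  have hKrapp : ∀ x : (Dᗮ : Submodule ℝ E), (Kr x : F) = K (x : E) := fun x => rfl
  have hinj : Kr.ker = ⊥ := by
    rw [LinearMap.ker_eq_bot']
    intro x hx
    have hx0 : K (x : E) = 0 := by
      have := congrArg (Subtype.val) hx
      simpa [hKrapp] using this
    have hxD : (x : E) ∈ D := hx0
    have : (x : E) = 0 := by
      have h2 := x.2
      have := (Submodule.mem_orthogonal _ _).mp h2 (x : E) hxD
      simpa [inner_self_eq_zero] using this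
    exact Subtype.ext this
  have hsurj : Kr.range = ⊤ := by
    rw [LinearMap.range_eq_top]
    rintro ⟨m, x, rfl⟩
    obtain ⟨d, hd, p, hp, hx⟩ := D.exists_add_mem_mem_orthogonal x
    refine ⟨⟨p, hp⟩, ?_⟩
    apply Subtype.ext
    have hKd : K d = 0 := hd
    simp [hKrapp, hx, map_add, hKd]
  set KrE := ContinuousLinearEquiv.ofBijective Kr hinj hsurj with hKrE
  have hbD : b ∈ (Dᗮ : Submodule ℝ E) := by
    rw [Submodule.mem_orthogonal]
    intro d hd
    rw [real_inner_comm]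
    exact hb d hd
  set m : M := ContinuousLinearMap.adjoint (KrE.symm : M →L[ℝ] (Dᗮ : Submodule ℝ E)) ⟨b, hbD⟩
    with hm
  refine ⟨(m : F), ?_⟩
  have hmain : ∀ x : E, ⟪ContinuousLinearMap.adjoint K (m : F), x⟫_ℝ = ⟪b, x⟫_ℝ := by
    intro x
    obtain ⟨d, hd, p, hp, hx⟩ := D.exists_add_mem_mem_orthogonal x
    have hKd : K d = 0 := hd
    have hKx : K x = (Kr ⟨p, hp⟩ : F) := by
      rw [hKrapp]; rw [hx]; simp [map_add, hKd]
    rw [ContinuousLinearMap.adjoint_inner_left, hKx]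
    have h1 : ⟪(m : F), (Kr ⟨p, hp⟩ : F)⟫_ℝ = ⟪m, Kr ⟨p, hp⟩⟫_ℝ := rfl
    rw [h1]
    have h2 : Kr ⟨p, hp⟩ = KrE ⟨p, hp⟩ := by
      rw [hKrE]; exact (ContinuousLinearEquiv.coeFn_ofBijective Kr hinj hsurj ▸ rfl)
    rw [h2, hm, ContinuousLinearMap.adjoint_inner_left]
    have h3 : (KrE.symm : M →L[ℝ] (Dᗮ : Submodule ℝ E)) (KrE ⟨p, hp⟩) = ⟨p, hp⟩ := by
      simp
    rw [h3]
    have h4 : ⟪(⟨b, hbD⟩ : (Dᗮ : Submodule ℝ E)), (⟨p, hp⟩ : (Dᗮ : Submodule ℝ E))⟫_ℝ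
        = ⟪b, p⟫_ℝ := rfl
    rw [h4, hx, inner_add_right]
    have : ⟪b, d⟫_ℝ = 0 := hb d hKd
    simp [this]
  have h0 := hmain (ContinuousLinearMap.adjoint K (m : F) - b)
  have h1 : ⟪ContinuousLinearMap.adjoint K (m : F) - b,
      ContinuousLinearMap.adjoint K (m : F) - b⟫_ℝ = 0 := by
    rw [inner_sub_left, h0, sub_self]
  exact sub_eq_zero.mp (inner_self_eq_zero.mp h1)

/-- Reformulation of a finite-sum inclusion in the product space.
With `S` an invertible bounded self-adjoint operator on `H^N` and `K` a bounded linear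
operator with closed range whose kernel is the diagonal subspace, `y` solves
`0 ∈ S T(S y) + (K S)* N_{{0}}(K S y)` iff `y = S⁻¹(z, …, z)` for some `z` solving
`0 ∈ Σᵢ Tᵢ(z)`.  (Here `u ∈ N_{{0}}(K S y)` is encoded as `K (S y) = 0` with `u` arbitrary.) -/
theorem stmt3 {H : Type*} [NormedAddCommGroup H] [InnerProductSpace ℝ H] [CompleteSpace H]
    {N : ℕ} (T : Fin N → H → Set H)
    (S : PiLp 2 (fun _ : Fin N => H) ≃L[ℝ] PiLp 2 (fun _ : Fin N => H))
    (hS : ∀ x y : PiLp 2 (fun _ : Fin N => H), ⟪S x, y⟫_ℝ = ⟪x, S y⟫_ℝ)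
    (K : PiLp 2 (fun _ : Fin N => H) →L[ℝ] PiLp 2 (fun _ : Fin N => H))
    (hKrange : IsClosed (Set.range K))
    (hKker : ∀ z : PiLp 2 (fun _ : Fin N => H), K z = 0 ↔ ∃ w : H, ∀ i, z i = w)
    (y : PiLp 2 (fun _ : Fin N => H)) :
    (∃ a u : PiLp 2 (fun _ : Fin N => H),
        (∀ i, a i ∈ T i ((S y) i)) ∧ K (S y) = 0 ∧
        S a + ContinuousLinearMap.adjoint
          (K.comp (S : PiLp 2 (fun _ : Fin N => H) →L[ℝ] PiLp 2 (fun _ : Fin N => H))) u = 0) ↔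
    (∃ z : H, y = S.symm (WithLp.toLp 2 (fun _ => z)) ∧
        ∃ w : Fin N → H, (∀ i, w i ∈ T i z) ∧ ∑ i, w i = 0) := by
  have hS'app : ∀ x : PiLp 2 (fun _ : Fin N => H),
      (S : PiLp 2 (fun _ : Fin N => H) →L[ℝ] PiLp 2 (fun _ : Fin N => H)) x = S x := fun _ => rfl
  have hSadj : ContinuousLinearMap.adjoint
      (S : PiLp 2 (fun _ : Fin N => H) →L[ℝ] PiLp 2 (fun _ : Fin N => H))
      = (S : PiLp 2 (fun _ : Fin N => H) →L[ℝ] PiLp 2 (fun _ : Fin N => H)) :=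
    ((ContinuousLinearMap.eq_adjoint_iff _ _).mpr (by simpa [hS'app] using hS)).symm
  have hadj : ContinuousLinearMap.adjoint
      (K.comp (S : PiLp 2 (fun _ : Fin N => H) →L[ℝ] PiLp 2 (fun _ : Fin N => H)))
      = (S : PiLp 2 (fun _ : Fin N => H) →L[ℝ] PiLp 2 (fun _ : Fin N => H)).comp
        (ContinuousLinearMap.adjoint K) := by
    rw [ContinuousLinearMap.adjoint_comp, hSadj]
  constructor
  · rintro ⟨a, u, ha, hKSy, heq⟩
    obtain ⟨z, hz⟩ := (hKker (S y)).mp hKSy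
    have hSy : S y = WithLp.toLp 2 (fun _ => z) := PiLp.ext hz
    refine ⟨z, by rw [← hSy]; exact (S.symm_apply_apply y).symm, fun i => a i,
      fun i => by rw [← hz i]; exact ha i, ?_⟩
    rw [hadj] at heq
    have hcomp : ((S : PiLp 2 (fun _ : Fin N => H) →L[ℝ] PiLp 2 (fun _ : Fin N => H)).comp
        (ContinuousLinearMap.adjoint K)) u = S (ContinuousLinearMap.adjoint K u) := rfl
    rw [hcomp] at heq
    have hzero : S (a + ContinuousLinearMap.adjoint K u) = S 0 := by
      rw [map_add, map_zero]; exact heq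
    have haeq : a = -(ContinuousLinearMap.adjoint K u) :=
      eq_neg_of_add_eq_zero_left (S.injective hzero)
    have hkey : ∀ h : H, ⟪∑ i, a i, h⟫_ℝ = 0 := by
      intro h
      have hKd : K (WithLp.toLp 2 (fun _ => h)) = 0 :=
        (hKker _).mpr ⟨h, fun _ => rfl⟩
      have hin : ⟪a, WithLp.toLp 2 (fun _ => h)⟫_ℝ = 0 := by
        rw [haeq, inner_neg_left, ContinuousLinearMap.adjoint_inner_left, hKd,
          inner_zero_right, neg_zero]
      rw [sum_inner]
      simpa [PiLp.inner_apply] using hin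
    exact inner_self_eq_zero.mp (hkey (∑ i, a i))
  · rintro ⟨z, hy, w, hw, hsum⟩
    have hSy : S y = WithLp.toLp 2 (fun _ => z) := by
      rw [hy]; exact S.apply_symm_apply _
    set a : PiLp 2 (fun _ : Fin N => H) := WithLp.toLp 2 w with haa
    have had : ∀ d : PiLp 2 (fun _ : Fin N => H), K d = 0 → ⟪-a, d⟫_ℝ = 0 := by
      intro d hd
      obtain ⟨h, hh⟩ := (hKker d).mp hd
      rw [inner_neg_left, neg_eq_zero, PiLp.inner_apply]
      have heach : ∀ i, ⟪a i, d i⟫_ℝ = ⟪w i, h⟫_ℝ := fun i => by rw [hh i]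
      rw [Finset.sum_congr rfl (fun i _ => heach i), ← sum_inner, hsum, inner_zero_left]
    obtain ⟨u, hu⟩ := key_range_adjoint K hKrange (-a) had
    refine ⟨a, u, fun i => by rw [hSy]; exact hw i, (hKker _).mpr ⟨z, fun i => by rw [hSy]⟩, ?_⟩
    rw [hadj]
    have hcomp : ((S : PiLp 2 (fun _ : Fin N => H) →L[ℝ] PiLp 2 (fun _ : Fin N => H)).comp
        (ContinuousLinearMap.adjoint K)) u = S (ContinuousLinearMap.adjoint K u) := rfl
    rw [hcomp, hu]
    simp
end

section
/- Let H be a real Hilbert space, W ∈ ℝ^{N×N} a mixing matrix, Γ = diag(γ₁, …, γ_N) ⊗ I with γ_i > 0, K = (((I − W)/2)^{1/2}) ⊗ I, and M = ((1/β)·I − K Γ² K)^{1/2} where 0 < β < ‖Γ K² Γ‖⁻¹. Then the operator C̃ on H^N × H^N defined by C̃(z, z̃) = (Γ K N_{{0}}(K Γ z + M z̃), M N_{{0}}(K Γ z + M z̃)) equals [KΓ, M]* ∘ N_{{0}} ∘ [KΓ, M], satisfies [KΓ, M] [KΓ, M]* = (1/β)·I, and is maximally monotone. -/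
open scoped InnerProductSpace

/-- A set-valued operator `A : K ⇒ K` is monotone if `⟪x − y, x' − y'⟫ ≥ 0`
for all pairs `(x, x')`, `(y, y')` in its graph. -/
def IsMonotoneOp {K : Type*} [NormedAddCommGroup K] [InnerProductSpace ℝ K]
    (A : K → Set K) : Prop :=
  ∀ ⦃x x' y y' : K⦄, x' ∈ A x → y' ∈ A y → 0 ≤ ⟪x - y, x' - y'⟫_ℝ

/-- A monotone set-valued operator is maximally monotone if no monotone operator's graph
properly contains its graph. -/
def IsMaxMonotoneOp {K : Type*} [NormedAddCommGroup K] [InnerProductSpace ℝ K]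
    (A : K → Set K) : Prop :=
  IsMonotoneOp A ∧ ∀ B : K → Set K, IsMonotoneOp B → (∀ x, A x ⊆ B x) → ∀ x, B x ⊆ A x

/-- A mixing matrix: symmetric, `ker(I − W) = ℝ𝟏`, and `−I ≺ W ⪯ I` in the Loewner order. -/
def IsMixingMatrix {N : ℕ} (W : Matrix (Fin N) (Fin N) ℝ) : Prop :=
  W.IsSymm ∧ (∀ v : Fin N → ℝ, (1 - W).mulVec v = 0 ↔ ∃ t : ℝ, ∀ i, v i = t) ∧
    (W + 1).PosDef ∧ (1 - W).PosSemidef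

set_option synthInstance.maxHeartbeats 1000000 in
set_option maxHeartbeats 2000000 in
/-- With `K = ((I−W)/2)^{1/2} ⊗ I`, `Γ = diag(γ) ⊗ I` (`γᵢ > 0`),
`M = ((1/β)I − K Γ² K)^{1/2}` and `0 < β < ‖Γ K² Γ‖⁻¹`, and `J = [KΓ, M]` the operator
`(z, z̃) ↦ KΓz + Mz̃`, the operator `C̃(z, z̃) = (Γ K N₀(KΓz + Mz̃), M N₀(KΓz + Mz̃))`
equals `J* ∘ N₀ ∘ J`, one has `J J* = (1/β)·I`, and `C̃` is maximally monotone. -/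
theorem stmt8 {H : Type*} [NormedAddCommGroup H] [InnerProductSpace ℝ H] [CompleteSpace H]
    {N : ℕ} (W : Matrix (Fin N) (Fin N) ℝ) (hW : IsMixingMatrix W)
    (γ : Fin N → ℝ) (hγ : ∀ i, 0 < γ i)
    (Γ K M : PiLp 2 (fun _ : Fin N => H) →L[ℝ] PiLp 2 (fun _ : Fin N => H))
    (hΓ : ∀ (x : PiLp 2 (fun _ : Fin N => H)) i, Γ x i = γ i • x i)
    (hKsa : ∀ x y : PiLp 2 (fun _ : Fin N => H), ⟪K x, y⟫_ℝ = ⟪x, K y⟫_ℝ)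
    (hKpsd : ∀ x : PiLp 2 (fun _ : Fin N => H), 0 ≤ ⟪K x, x⟫_ℝ)
    (hK2 : ∀ (x : PiLp 2 (fun _ : Fin N => H)) i,
      K (K x) i = (2 : ℝ)⁻¹ • (x i - ∑ j, W i j • x j))
    (β : ℝ) (hβ : 0 < β) (hβ' : β * ‖Γ.comp ((K.comp K).comp Γ)‖ < 1)
    (hMsa : ∀ x y : PiLp 2 (fun _ : Fin N => H), ⟪M x, y⟫_ℝ = ⟪x, M y⟫_ℝ)
    (hMpsd : ∀ x : PiLp 2 (fun _ : Fin N => H), 0 ≤ ⟪M x, x⟫_ℝ)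
    (hM2 : ∀ x : PiLp 2 (fun _ : Fin N => H), M (M x) = β⁻¹ • x - K (Γ (Γ (K x))))
    (J : WithLp 2 (PiLp 2 (fun _ : Fin N => H) × PiLp 2 (fun _ : Fin N => H)) →L[ℝ]
      PiLp 2 (fun _ : Fin N => H))
    (hJ : ∀ t : WithLp 2 (PiLp 2 (fun _ : Fin N => H) × PiLp 2 (fun _ : Fin N => H)),
      J t = K (Γ (WithLp.ofLp t).1) + M (WithLp.ofLp t).2) :
    (∀ t : WithLp 2 (PiLp 2 (fun _ : Fin N => H) × PiLp 2 (fun _ : Fin N => H)),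
      {pq : WithLp 2 (PiLp 2 (fun _ : Fin N => H) × PiLp 2 (fun _ : Fin N => H)) |
          J t = 0 ∧ ∃ n : PiLp 2 (fun _ : Fin N => H),
            (WithLp.ofLp pq).1 = Γ (K n) ∧ (WithLp.ofLp pq).2 = M n} =
        ContinuousLinearMap.adjoint J '' {_n : PiLp 2 (fun _ : Fin N => H) | J t = 0}) ∧
    (∀ u : PiLp 2 (fun _ : Fin N => H), J (ContinuousLinearMap.adjoint J u) = β⁻¹ • u) ∧
    IsMaxMonotoneOp (fun t : WithLp 2 (PiLp 2 (fun _ : Fin N => H) ×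
        PiLp 2 (fun _ : Fin N => H)) =>
      {pq : WithLp 2 (PiLp 2 (fun _ : Fin N => H) × PiLp 2 (fun _ : Fin N => H)) |
        J t = 0 ∧ ∃ n : PiLp 2 (fun _ : Fin N => H),
          (WithLp.ofLp pq).1 = Γ (K n) ∧ (WithLp.ofLp pq).2 = M n}) := by
  classical
  have hΓsa : ∀ x y : PiLp 2 (fun _ : Fin N => H), ⟪Γ x, y⟫_ℝ = ⟪x, Γ y⟫_ℝ := by
    intro x y
    simp [PiLp.inner_apply, hΓ, real_inner_smul_left, real_inner_smul_right]
  have hadj : ∀ u, ContinuousLinearMap.adjoint J u =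
      ((WithLp.equiv 2 _).symm (Γ (K u), M u) :
        WithLp 2 (PiLp 2 (fun _ : Fin N => H) × PiLp 2 (fun _ : Fin N => H))) := by
    intro u
    apply ext_inner_right ℝ
    intro t
    rw [ContinuousLinearMap.adjoint_inner_left, hJ t, WithLp.prod_inner_apply,
      inner_add_right, ← hKsa, ← hΓsa, ← hMsa]
    rfl
  have hadj1 : ∀ u, (WithLp.ofLp (ContinuousLinearMap.adjoint J u)).1 = Γ (K u) := by
    intro u; rw [hadj]; rfl
  have hadj2 : ∀ u, (WithLp.ofLp (ContinuousLinearMap.adjoint J u)).2 = M u := by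
    intro u; rw [hadj]; rfl
  have hJJ : ∀ u : PiLp 2 (fun _ : Fin N => H),
      J (ContinuousLinearMap.adjoint J u) = β⁻¹ • u := by
    intro u
    rw [hJ, hadj1, hadj2, hM2]
    abel
  -- membership characterization
  have hmem : ∀ (t pq : WithLp 2 (PiLp 2 (fun _ : Fin N => H) ×
      PiLp 2 (fun _ : Fin N => H))),
      (J t = 0 ∧ ∃ n : PiLp 2 (fun _ : Fin N => H),
          (WithLp.ofLp pq).1 = Γ (K n) ∧ (WithLp.ofLp pq).2 = M n) ↔
      (J t = 0 ∧ ∃ n, pq = ContinuousLinearMap.adjoint J n) := by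
    intro t pq
    constructor
    · rintro ⟨ht, n, h1, h2⟩
      refine ⟨ht, n, ?_⟩
      rw [hadj n]
      exact WithLp.ofLp_injective 2 (Prod.ext h1 h2)
    · rintro ⟨ht, n, rfl⟩
      exact ⟨ht, n, hadj1 n, hadj2 n⟩
  refine ⟨?_, hJJ, ?_, ?_⟩
  · intro t
    ext pq
    simp only [Set.mem_setOf_eq, Set.mem_image]
    rw [hmem t pq]
    constructor
    · rintro ⟨ht, n, rfl⟩
      exact ⟨n, ht, rfl⟩
    · rintro ⟨n, ht, rfl⟩
      exact ⟨ht, n, rfl⟩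
  · -- monotone
    rintro x x' y y' hx' hy'
    rw [Set.mem_setOf_eq, hmem x x'] at hx'
    rw [Set.mem_setOf_eq, hmem y y'] at hy'
    obtain ⟨hx, m, rfl⟩ := hx'
    obtain ⟨hy, n, rfl⟩ := hy'
    rw [← map_sub, ContinuousLinearMap.adjoint_inner_right, map_sub, hx, hy, sub_zero,
      inner_zero_left]
  · -- maximal
    intro B hB hAB x x' hx'
    have key : ∀ c a : ℝ, (∀ s : ℝ, 0 ≤ c - s * a) → a = 0 := by
      intro c a h
      by_contra ha
      have h2 := h ((c + 1) / a)
      rw [div_mul_cancel₀ _ ha] at h2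
      linarith
    -- step 1 : ⟪x, J* u⟫ = 0 for all u
    have h1 : ∀ u, ⟪x, ContinuousLinearMap.adjoint J u⟫_ℝ = 0 := by
      intro u
      refine key ⟪x, x'⟫_ℝ _ fun s => ?_
      have h0 : (s • ContinuousLinearMap.adjoint J u) ∈ B 0 := by
        apply hAB
        refine ⟨map_zero J, s • u, ?_, ?_⟩
        · rw [← map_smul, hadj1]
        · rw [← map_smul, hadj2]
      have := hB hx' h0
      rwa [sub_zero, inner_sub_right, real_inner_smul_right] at this
    have hJx : J x = 0 := by
      have := h1 (J x)
      rwa [ContinuousLinearMap.adjoint_inner_right, inner_self_eq_zero] at this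
    -- step 2 : ⟪v, x'⟫ = 0 for all v ∈ ker J
    have h2 : ∀ v : WithLp 2 (PiLp 2 (fun _ : Fin N => H) × PiLp 2 (fun _ : Fin N => H)),
        J v = 0 → ⟪v, x'⟫_ℝ = 0 := by
      intro v hv
      refine key ⟪x, x'⟫_ℝ _ fun s => ?_
      have h0 : (0 : WithLp 2 (PiLp 2 (fun _ : Fin N => H) ×
          PiLp 2 (fun _ : Fin N => H))) ∈ B (s • v) := by
        apply hAB
        refine ⟨by rw [map_smul, hv, smul_zero], 0, ?_, ?_⟩ <;> simp
      have := hB hx' h0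
      rwa [sub_zero, inner_sub_left, real_inner_smul_left] at this
    -- conclude x' = J* (β • J x')
    set w := x' - β • ContinuousLinearMap.adjoint J (J x') with hw
    have hJw : J w = 0 := by
      rw [hw, map_sub, map_smul, hJJ, smul_smul, mul_inv_cancel₀ (ne_of_gt hβ), one_smul,
        sub_self]
    have hw0 : w = 0 := by
      have e1 : ⟪w, x'⟫_ℝ = 0 := h2 w hJw
      have e2 : ⟪w, β • ContinuousLinearMap.adjoint J (J x')⟫_ℝ = 0 := by
        rw [real_inner_smul_right, ContinuousLinearMap.adjoint_inner_right, hJw,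
          inner_zero_left, mul_zero]
      have e3 : ⟪w, w⟫_ℝ = 0 := by
        rw [hw, inner_sub_right, ← hw, e1, e2, sub_zero]
      exact inner_self_eq_zero.mp e3
    have hx'' : x' = ContinuousLinearMap.adjoint J (β • J x') := by
      have h3 := sub_eq_zero.mp hw0
      rw [map_smul]
      exact h3
    rw [Set.mem_setOf_eq, hmem x x']
    exact ⟨hJx, β • J x', hx''⟩
end

section
/- Let H be a real Hilbert space and let K = (((I − W)/2)^{1/2}) ⊗ I, Γ = Λ^{1/2} = diag(√α₁, …, √α_N) ⊗ I, and M = ((1/β)·I − K Γ² K)^{1/2} on H^N, where W is a mixing matrix, α_i > 0, and 0 < β < ‖Γ K² Γ‖⁻¹. For any sequences a^k, v^k ∈ H^N and u^k defined by u^k = u^{k−1} + β K Γ (2a^k − a^{k−1} − Γ(v^k − v^{k−1})) together with c^{k+1} = a^k − Γ v^k − Γ K u^k, the iterates satisfy c^{k+1} = c^k − a^k + (I − β Γ K² Γ)(2a^k − a^{k−1} − Γ(v^k − v^{k−1})) for all k ≥ 1; equivalently, applying Γ and writing x^k = Γa^k, z^k = Γc^k, z^{k+1} = z^k − x^k + (I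 − β Λ ((I−W)/2) ⊗ I)(2x^k − x^{k−1} − Λ(v^k − v^{k−1})). -/
open scoped InnerProductSpace

/-- With `K = ((I−W)/2)^{1/2} ⊗ I`, `Γ = Λ^{1/2} = diag(√α) ⊗ I`,
`M = ((1/β)I − KΓ²K)^{1/2}`, `0 < β < ‖ΓK²Γ‖⁻¹`, and sequences `u^k`, `c^k` satisfying
`u^k = u^{k−1} + βKΓ(2a^k − a^{k−1} − Γ(v^k − v^{k−1}))` and
`c^{k+1} = a^k − Γv^k − ΓKu^k`, one has, for all `k ≥ 1`,
`c^{k+1} = c^k − a^k + (I − βΓK²Γ)(2a^k − a^{k−1} − Γ(v^k − v^{k−1}))`; equivalently,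
with `x^k = Γa^k`, `z^k = Γc^k`,
`z^{k+1} = z^k − x^k + (I − βΛ((I−W)/2)⊗I)(2x^k − x^{k−1} − Λ(v^k − v^{k−1}))`. -/
theorem stmt14 {H : Type*} [NormedAddCommGroup H] [InnerProductSpace ℝ H] [CompleteSpace H]
    {N : ℕ} (W : Matrix (Fin N) (Fin N) ℝ) (hW : IsMixingMatrix W)
    (α : Fin N → ℝ) (hα : ∀ i, 0 < α i)
    (Γ K M : PiLp 2 (fun _ : Fin N => H) →L[ℝ] PiLp 2 (fun _ : Fin N => H))
    (hΓ : ∀ (x : PiLp 2 (fun _ : Fin N => H)) i, Γ x i = Real.sqrt (α i) • x i)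
    (hKsa : ∀ x y : PiLp 2 (fun _ : Fin N => H), ⟪K x, y⟫_ℝ = ⟪x, K y⟫_ℝ)
    (hKpsd : ∀ x : PiLp 2 (fun _ : Fin N => H), 0 ≤ ⟪K x, x⟫_ℝ)
    (hK2 : ∀ (x : PiLp 2 (fun _ : Fin N => H)) i,
      K (K x) i = (2 : ℝ)⁻¹ • (x i - ∑ j, W i j • x j))
    (β : ℝ) (hβ : 0 < β) (hβ' : β * ‖Γ.comp ((K.comp K).comp Γ)‖ < 1)
    (hMsa : ∀ x y : PiLp 2 (fun _ : Fin N => H), ⟪M x, y⟫_ℝ = ⟪x, M y⟫_ℝ)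
    (hMpsd : ∀ x : PiLp 2 (fun _ : Fin N => H), 0 ≤ ⟪M x, x⟫_ℝ)
    (hM2 : ∀ x : PiLp 2 (fun _ : Fin N => H), M (M x) = β⁻¹ • x - K (Γ (Γ (K x))))
    (a v u c : ℕ → PiLp 2 (fun _ : Fin N => H))
    (hu : ∀ k, 1 ≤ k → u k = u (k - 1) +
      β • K (Γ ((2 : ℝ) • a k - a (k - 1) - Γ (v k - v (k - 1)))))
    (hc : ∀ k, c (k + 1) = a k - Γ (v k) - Γ (K (u k))) :
    (∀ k, 1 ≤ k → c (k + 1) = c k - a k +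
      (((2 : ℝ) • a k - a (k - 1) - Γ (v k - v (k - 1))) -
        β • Γ (K (K (Γ ((2 : ℝ) • a k - a (k - 1) - Γ (v k - v (k - 1)))))))) ∧
    (∀ k, 1 ≤ k → ∀ i, Γ (c (k + 1)) i = Γ (c k) i - Γ (a k) i +
      (((2 : ℝ) • Γ (a k) i - Γ (a (k - 1)) i - α i • (v k i - v (k - 1) i)) -
        (β * α i / 2) •
          (((2 : ℝ) • Γ (a k) i - Γ (a (k - 1)) i - α i • (v k i - v (k - 1) i)) -
            ∑ j, W i j •
              ((2 : ℝ) • Γ (a k) j - Γ (a (k - 1)) j - α j • (v k j - v (k - 1) j))))) := by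
  have key : ∀ k, 1 ≤ k → c (k + 1) = c k - a k +
      (((2 : ℝ) • a k - a (k - 1) - Γ (v k - v (k - 1))) -
        β • Γ (K (K (Γ ((2 : ℝ) • a k - a (k - 1) - Γ (v k - v (k - 1))))))) := by
    intro k hk
    have hck : c k = a (k - 1) - Γ (v (k - 1)) - Γ (K (u (k - 1))) := by
      have h := hc (k - 1)
      rwa [Nat.sub_add_cancel hk] at h
    rw [hc k, hck, hu k hk]
    simp only [map_add, map_sub, map_smul, smul_sub]
    module
  refine ⟨key, ?_⟩
  intro k hk i
  have hΓΓ : ∀ (x : PiLp 2 (fun _ : Fin N => H)) i, Γ (Γ x) i = α i • x i := by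
    intro x i
    rw [hΓ, hΓ, smul_smul, Real.mul_self_sqrt (hα i).le]
  set s : PiLp 2 (fun _ : Fin N => H) :=
    (2 : ℝ) • a k - a (k - 1) - Γ (v k - v (k - 1)) with hs
  have hΓs : ∀ j, Γ s j =
      (2 : ℝ) • Γ (a k) j - Γ (a (k - 1)) j - α j • (v k j - v (k - 1) j) := by
    intro j
    rw [hs]
    simp only [map_sub, map_smul]
    simp [hΓΓ, smul_sub]
  have hmain := key k hk
  rw [← hs] at hmain
  have hΓc : Γ (c (k + 1)) i = Γ (c k) i - Γ (a k) i + (Γ s i - β • Γ (Γ (K (K (Γ s)))) i) := by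
    rw [hmain]
    simp
  rw [hΓc, hΓΓ, hK2, ← hΓs i]
  have hsum : ∑ j, W i j • ((2 : ℝ) • Γ (a k) j - Γ (a (k - 1)) j
      - α j • (v k j - v (k - 1) j)) = ∑ j, W i j • Γ s j := by
    apply Finset.sum_congr rfl
    intro j _
    rw [hΓs j]
  rw [hsum]
  rw [smul_smul, smul_smul]
  ring_nf
end
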